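/- Fix a < 0. As η → ∞, the inverse matrix P(η)⁻¹ converges to the 2×2 matrix with rows (−√(1+a²)/a, 1/a) and (0, 1); equivalently, its first column (the right vector dual to L₊) converges to (−√(1+a²)/a, 0)ᵀ, a positive multiple of (−1/a, 0)ᵀ, and its second column (the right vector dual to L₋) converges to (1/a, 1)ᵀ. -/

import Mathlib

noncomputable def Mmat (a η : ℝ) : Matrix (Fin 2) (Fin 2) ℝ :=
  !![-η * a, 1 + η; 1, 0]

noncomputable def lamP (a η : ℝ) : ℝ :=
  (-(a * η) + Real.sqrt (a ^ 2 * η ^ 2 + 4 * (η + 1))) / 2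

noncomputable def lamM (a η : ℝ) : ℝ :=
  (-(a * η) - Real.sqrt (a ^ 2 * η ^ 2 + 4 * (η + 1))) / 2

noncomputable def Lp (a η : ℝ) : Fin 2 → ℝ :=
  (Real.sqrt ((1 + η) ^ 2 + lamP a η ^ 2))⁻¹ • ![lamP a η, 1 + η]

noncomputable def Lm (a η : ℝ) : Fin 2 → ℝ :=
  (Real.sqrt ((1 + η) ^ 2 + lamM a η ^ 2))⁻¹ • ![lamM a η, 1 + η]

noncomputable def eucNorm (v : Fin 2 → ℝ) : ℝ :=
  Real.sqrt (v 0 ^ 2 + v 1 ^ 2)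

noncomputable def Pmat (a η : ℝ) : Matrix (Fin 2) (Fin 2) ℝ :=
  Matrix.of ![Lp a η, Lm a η]

def Amat : Matrix (Fin 2) (Fin 2) ℝ := !![0, 1; 1, 0]

open Filter Real

lemma aux_u : Tendsto (fun η : ℝ => (1+η)⁻¹) atTop (nhds 0) :=
  (tendsto_atTop_add_const_left atTop 1 tendsto_id).inv_tendsto_atTop

lemma aux_s : Tendsto (fun η : ℝ => η/(1+η)) atTop (nhds 1) := by
  have h : Tendsto (fun η : ℝ => 1 - (1+η)⁻¹) atTop (nhds (1 - 0)) :=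
    tendsto_const_nhds.sub aux_u
  rw [sub_zero] at h
  refine h.congr' ?_
  filter_upwards [eventually_gt_atTop (0:ℝ)] with η hη
  have : (1:ℝ)+η ≠ 0 := by linarith
  field_simp
  ring

lemma aux_h (a : ℝ) (ha : a < 0) :
    Tendsto (fun η : ℝ => Real.sqrt (a^2 * (η/(1+η))^2 + 4*(1+η)⁻¹)) atTop (nhds (-a)) := by
  have h : Tendsto (fun η : ℝ => a^2 * (η/(1+η))^2 + 4*(1+η)⁻¹) atTop
      (nhds (a^2 * 1^2 + 4*0)) :=
    (tendsto_const_nhds.mul (aux_s.pow 2)).add (tendsto_const_nhds.mul aux_u)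
  have h2 := h.sqrt
  have : Real.sqrt (a^2 * 1^2 + 4*0) = -a := by
    rw [show a^2 * 1^2 + 4*(0:ℝ) = (-a)^2 by ring, Real.sqrt_sq (by linarith)]
  rwa [this] at h2

lemma sqrt_eq (a η : ℝ) (hη : 0 ≤ η) :
    Real.sqrt (a ^ 2 * η ^ 2 + 4 * (η + 1)) / (1+η)
      = Real.sqrt (a^2 * (η/(1+η))^2 + 4*(1+η)⁻¹) := by
  have h1 : (0:ℝ) < 1 + η := by linarith
  have : a^2 * (η/(1+η))^2 + 4*(1+η)⁻¹ = (a ^ 2 * η ^ 2 + 4 * (η + 1)) / (1+η)^2 := by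
    field_simp; ring
  rw [this, Real.sqrt_div (by positivity), Real.sqrt_sq h1.le]

lemma tendsto_lamP (a : ℝ) (ha : a < 0) :
    Tendsto (fun η => lamP a η / (1+η)) atTop (nhds (-a)) := by
  have h : Tendsto (fun η : ℝ =>
      (-(a * (η/(1+η))) + Real.sqrt (a^2 * (η/(1+η))^2 + 4*(1+η)⁻¹)) / 2)
      atTop (nhds ((-(a*1) + -a)/2)) :=
    (((tendsto_const_nhds.mul aux_s).neg).add (aux_h a ha)).div_const 2
  have he : ((-(a*1) + -a)/2 : ℝ) = -a := by ring
  rw [he] at h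
  refine h.congr' ?_
  filter_upwards [eventually_ge_atTop (0:ℝ)] with η hη
  have h1 : (0:ℝ) < 1 + η := by linarith
  rw [← sqrt_eq a η hη, lamP]
  field_simp

lemma tendsto_lamM (a : ℝ) (ha : a < 0) :
    Tendsto (fun η => lamM a η / (1+η)) atTop (nhds 0) := by
  have h : Tendsto (fun η : ℝ =>
      (-(a * (η/(1+η))) - Real.sqrt (a^2 * (η/(1+η))^2 + 4*(1+η)⁻¹)) / 2)
      atTop (nhds ((-(a*1) - -a)/2)) :=
    (((tendsto_const_nhds.mul aux_s).neg).sub (aux_h a ha)).div_const 2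
  have he : ((-(a*1) - -a)/2 : ℝ) = 0 := by ring
  rw [he] at h
  refine h.congr' ?_
  filter_upwards [eventually_ge_atTop (0:ℝ)] with η hη
  have h1 : (0:ℝ) < 1 + η := by linarith
  rw [← sqrt_eq a η hη, lamM]
  field_simp

lemma key (η lam : ℝ) (hη : (0:ℝ) < 1+η) :
    (Real.sqrt ((1+η)^2 + lam^2))⁻¹ * lam
      = (lam/(1+η)) / Real.sqrt (1 + (lam/(1+η))^2) ∧
    (Real.sqrt ((1+η)^2 + lam^2))⁻¹ * (1+η)
      = 1 / Real.sqrt (1 + (lam/(1+η))^2) := by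
  set x := lam/(1+η) with hx
  have hl : lam = x*(1+η) := by rw [hx, div_mul_cancel₀ _ hη.ne']
  have h2 : (1+η)^2+lam^2 = (1+η)^2*(1+x^2) := by rw [hl]; ring
  rw [h2, Real.sqrt_mul (sq_nonneg _), Real.sqrt_sq hη.le]
  have hs : 0 < Real.sqrt (1+x^2) := Real.sqrt_pos.mpr (by positivity)
  constructor
  · rw [hl]; field_simp
  · field_simp

lemma entry_lim (lam : ℝ → ℝ) (L : ℝ)
    (hlam : Tendsto (fun η => lam η/(1+η)) atTop (nhds L)) :
    Tendsto (fun η => (Real.sqrt ((1+η)^2 + lam η^2))⁻¹ * lam η) atTop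
      (nhds (L/Real.sqrt (1+L^2))) ∧
    Tendsto (fun η => (Real.sqrt ((1+η)^2 + lam η^2))⁻¹ * (1+η)) atTop
      (nhds (1/Real.sqrt (1+L^2))) := by
  have hden : Tendsto (fun η => Real.sqrt (1+(lam η/(1+η))^2)) atTop
      (nhds (Real.sqrt (1+L^2))) :=
    (tendsto_const_nhds.add (hlam.pow 2)).sqrt
  have hne : Real.sqrt (1+L^2) ≠ 0 := by positivity
  constructor
  · refine (hlam.div hden hne).congr' ?_
    filter_upwards [eventually_ge_atTop (0:ℝ)] with η hη
    exact ((key η (lam η) (by linarith)).1).symm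
  · refine (tendsto_const_nhds.div hden hne).congr' ?_
    filter_upwards [eventually_ge_atTop (0:ℝ)] with η hη
    exact ((key η (lam η) (by linarith)).2).symm

lemma tendsto_Pmat (a : ℝ) (ha : a < 0) :
    Tendsto (Pmat a) atTop
      (nhds !![-a/Real.sqrt (1+a^2), 1/Real.sqrt (1+a^2); 0, 1]) := by
  have hP := entry_lim (lamP a) (-a) (tendsto_lamP a ha)
  have hM := entry_lim (lamM a) 0 (tendsto_lamM a ha)
  simp only [neg_sq] at hP
  norm_num [Real.sqrt_one] at hM
  refine tendsto_pi_nhds.mpr ?_; intro i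
  rw [tendsto_pi_nhds]; intro j
  fin_cases i <;> fin_cases j <;>
    simp only [Pmat, Lp, Lm, Matrix.of_apply, Matrix.cons_val_zero, Matrix.cons_val_one,
      Matrix.head_cons, Pi.smul_apply, smul_eq_mul, Matrix.cons_val', Matrix.empty_val',
      Matrix.cons_val_fin_one, Fin.zero_eta, Fin.mk_one]
  · exact hP.1
  · exact hP.2
  · exact hM.1
  · exact hM.2

theorem stmt13 (a : ℝ) (ha : a < 0) :
    Filter.Tendsto (fun η => (Pmat a η)⁻¹)
      Filter.atTop (nhds !![-Real.sqrt (1 + a ^ 2) / a, 1 / a; 0, 1]) ∧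
    Filter.Tendsto (fun η => fun i => (Pmat a η)⁻¹ i 0)
      Filter.atTop (nhds ![-Real.sqrt (1 + a ^ 2) / a, 0]) ∧
    (∃ c > (0 : ℝ), (![-Real.sqrt (1 + a ^ 2) / a, 0] : Fin 2 → ℝ) = c • ![-1 / a, 0]) ∧
    Filter.Tendsto (fun η => fun i => (Pmat a η)⁻¹ i 1)
      Filter.atTop (nhds ![1 / a, 1]) := by
  have ha0 : a ≠ 0 := ha.ne
  set c := Real.sqrt (1 + a^2) with hc
  have hcpos : 0 < c := Real.sqrt_pos.mpr (by positivity)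
  set P : Matrix (Fin 2) (Fin 2) ℝ := !![-a/c, 1/c; 0, 1] with hPdef
  set T : Matrix (Fin 2) (Fin 2) ℝ := !![-c/a, 1/a; 0, 1] with hTdef
  have hdet : P.det = -a/c := by
    simp [hPdef, Matrix.det_fin_two_of]
  have hdetne : P.det ≠ 0 := by
    rw [hdet]
    have : -a > 0 := by linarith
    positivity
  have hPinv : P⁻¹ = T := by
    apply Matrix.inv_eq_right_inv
    ext i j
    fin_cases i <;> fin_cases j <;>
      simp [hPdef, hTdef, Matrix.mul_apply, Fin.sum_univ_two, Matrix.one_apply] <;>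
      field_simp <;> ring
  have hcont : ContinuousAt Ring.inverse P.det := by
    rw [Ring.inverse_eq_inv']
    exact continuousAt_inv₀ hdetne
  have hInv : Tendsto (fun η => (Pmat a η)⁻¹) atTop (nhds T) := by
    have h := (continuousAt_matrix_inv P hcont).tendsto.comp (tendsto_Pmat a ha)
    rw [hPinv] at h
    exact h
  have hT00 : T 0 0 = -c/a := by simp [hTdef]
  have hT01 : T 0 1 = 1/a := by simp [hTdef]
  have hT10 : T 1 0 = 0 := by simp [hTdef]
  have hT11 : T 1 1 = 1 := by simp [hTdef]
  refine ⟨?_, ?_, ⟨c, hcpos, ?_⟩, ?_⟩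
  · exact hInv
  · rw [tendsto_pi_nhds]
    intro i
    have h := (tendsto_pi_nhds.mp ((tendsto_pi_nhds.mp hInv) i)) 0
    fin_cases i
    · simpa [hT00, neg_div] using h
    · simpa [hT10] using h
  · funext i
    fin_cases i <;> simp <;> field_simp
  · rw [tendsto_pi_nhds]
    intro i
    have h := (tendsto_pi_nhds.mp ((tendsto_pi_nhds.mp hInv) i)) 1
    fin_cases i
    · simpa [hT01] using h
    · simpa [hT11] using h
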